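/- There exists a constant C > 0 such that the following holds: for all integers N ≥ 2 and M with 2 ≤ M ≤ 2^N, every integer r ∈ {1,…,N}, and all integers p_1, …, p_r ∈ {1,…,N} satisfying ∑_{i=1}^r p_i ≤ N and ∏_{i=1}^r max{2, p_i} ≤ M, one has ∑_{i=1}^r √(p_i) ≤ C · √( N · log₂ M / ( log₂(N / log₂ M) + 1 ) ). -/

import Mathlib

open Finset Real

set_option maxHeartbeats 1000000

private lemma aux_mono (x y : ℝ) (hx : Real.exp 2 ≤ x) (hxy : x ≤ y) :
    Real.sqrt x * Real.log y ≤ Real.sqrt y * Real.log x := by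
  have hx0 : 0 < x := lt_of_lt_of_le (Real.exp_pos 2) hx
  have hy0 : 0 < y := lt_of_lt_of_le hx0 hxy
  have hlx : 2 ≤ Real.log x := by
    have := Real.log_le_log (Real.exp_pos 2) hx
    rwa [Real.log_exp] at this
  have hly : Real.log x ≤ Real.log y := Real.log_le_log hx0 hxy
  have hlx0 : 0 < Real.log x := by linarith
  have hsx : Real.sqrt x = Real.exp (Real.log x / 2) := by
    rw [Real.sqrt_eq_rpow, Real.rpow_def_of_pos hx0, mul_one_div]
  have hsy : Real.sqrt y = Real.exp (Real.log y / 2) := by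
    rw [Real.sqrt_eq_rpow, Real.rpow_def_of_pos hy0, mul_one_div]
  have key : Real.log y / Real.log x ≤ Real.exp ((Real.log y - Real.log x) / 2) := by
    have h1 : Real.log y / Real.log x - 1 ≤ (Real.log y - Real.log x) / 2 := by
      rw [div_sub_one (ne_of_gt hlx0), div_le_div_iff₀ hlx0 two_pos]
      nlinarith
    have h2 := Real.add_one_le_exp (Real.log y / Real.log x - 1)
    have h3 : Real.exp (Real.log y / Real.log x - 1) ≤
        Real.exp ((Real.log y - Real.log x) / 2) := Real.exp_le_exp.mpr h1
    linarith
  have hdiv : Real.log y / Real.log x ≤ Real.sqrt y / Real.sqrt x := by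
    rw [hsx, hsy, ← Real.exp_sub]
    have : Real.log y / 2 - Real.log x / 2 = (Real.log y - Real.log x) / 2 := by ring
    rw [this]
    exact key
  have hsx0 : 0 < Real.sqrt x := Real.sqrt_pos.mpr hx0
  rw [div_le_div_iff₀ hlx0 hsx0] at hdiv
  linarith

private lemma aux_logb_lin (x : ℝ) (hx : 8 ≤ x) : Real.logb 2 x + 1 ≤ x := by
  have hx0 : (0:ℝ) < x := by linarith
  have hs : Real.sqrt x ^ 2 = x := Real.sq_sqrt hx0.le
  have hs28 : (2.8:ℝ) ≤ Real.sqrt x := by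
    rw [show (2.8:ℝ) = Real.sqrt (2.8^2) by
      rw [Real.sqrt_sq (by norm_num)]]
    exact Real.sqrt_le_sqrt (by nlinarith)
  have hlogs : Real.log (Real.sqrt x) ≤ Real.sqrt x - 1 :=
    Real.log_le_sub_one_of_pos (by linarith)
  have hlogx : Real.log (Real.sqrt x) = Real.log x / 2 := Real.log_sqrt hx0.le
  have hlog2 : (0.6931:ℝ) ≤ Real.log 2 := by
    have := Real.log_two_gt_d9; linarith
  have h2pos : (0:ℝ) < Real.log 2 := by linarith
  rw [Real.logb]
  rw [div_add' _ _ _ (ne_of_gt h2pos), div_le_iff₀ h2pos]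
  nlinarith [hs, hs28, hlogs, hlogx, hlog2]

private lemma aux_pointwise (t : ℝ) (ht : 9 ≤ t) (p : ℕ) (hp : 1 ≤ p) :
    Real.sqrt p ≤ (p : ℝ) / Real.sqrt t
      + (Real.sqrt t / Real.logb 2 t + 3) * Real.logb 2 ((max 2 p : ℕ) : ℝ) := by
  have ht0 : (0:ℝ) < t := by linarith
  have hst0 : 0 < Real.sqrt t := Real.sqrt_pos.mpr ht0
  have hmax2 : (2:ℝ) ≤ ((max 2 p : ℕ) : ℝ) := by
    exact_mod_cast Nat.le_max_left 2 p
  have hlogmax : 1 ≤ Real.logb 2 ((max 2 p : ℕ) : ℝ) := by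
    have := Real.logb_self_eq_one (b := 2) (by norm_num)
    calc (1:ℝ) = Real.logb 2 2 := this.symm
      _ ≤ _ := Real.logb_le_logb_of_le (by norm_num) (by norm_num) hmax2
  have hlogt : 0 < Real.logb 2 t := by
    apply Real.logb_pos (by norm_num); linarith
  have hc0 : 0 ≤ Real.sqrt t / Real.logb 2 t + 3 := by positivity
  rcases le_or_gt t (p : ℝ) with hcase | hcase
  · -- p ≥ t : first term suffices
    have h1 : Real.sqrt (p:ℝ) ≤ (p:ℝ) / Real.sqrt t := by
      rw [le_div_iff₀ hst0]
      have h2 : Real.sqrt t ≤ Real.sqrt (p:ℝ) := Real.sqrt_le_sqrt hcase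
      nlinarith [Real.sq_sqrt (le_trans ht0.le hcase), Real.sqrt_nonneg (p:ℝ)]
    have h2 : 0 ≤ (Real.sqrt t / Real.logb 2 t + 3) * Real.logb 2 ((max 2 p : ℕ) : ℝ) := by
      apply mul_nonneg hc0 (by linarith)
    linarith
  · rcases le_or_gt (p:ℝ) 9 with hsmall | hbig
    · -- small p: 3·logb term suffices
      have h1 : Real.sqrt (p:ℝ) ≤ 3 := by
        rw [show (3:ℝ) = Real.sqrt 9 by
          rw [show (9:ℝ) = 3^2 by norm_num, Real.sqrt_sq (by norm_num)]]
        exact Real.sqrt_le_sqrt hsmall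
      have h2 : (3:ℝ) ≤ 3 * Real.logb 2 ((max 2 p : ℕ) : ℝ) := by nlinarith
      have h3 : 0 ≤ (p:ℝ) / Real.sqrt t := by positivity
      have h4 : 0 ≤ Real.sqrt t / Real.logb 2 t * Real.logb 2 ((max 2 p : ℕ) : ℝ) := by
        positivity
      nlinarith
    · -- 9 < p < t : monotonicity
      have hp2 : (2:ℝ) ≤ (p:ℝ) := by linarith
      have hp2' : 2 ≤ p := by exact_mod_cast hp2
      have hmaxeq : ((max 2 p : ℕ) : ℝ) = (p : ℝ) := by
        rw [max_eq_right hp2']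
      have hexp2 : Real.exp 2 ≤ (p:ℝ) := by
        have h9 : Real.exp 2 ≤ 9 := by
          have he : Real.exp 2 = Real.exp 1 * Real.exp 1 := by
            rw [← Real.exp_add]; norm_num
          nlinarith [Real.exp_one_lt_d9, Real.exp_pos 1]
        linarith
      have hkey := aux_mono (p:ℝ) t hexp2 hcase.le
      have hlp : 0 < Real.log (p:ℝ) := Real.log_pos (by linarith)
      have hlt : 0 < Real.log t := Real.log_pos (by linarith)
      have hlog2 : (0:ℝ) < Real.log 2 := Real.log_pos (by norm_num)
      have h1 : Real.sqrt (p:ℝ) ≤ Real.sqrt t / Real.logb 2 t * Real.logb 2 (p:ℝ) := by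
        have h3 : Real.sqrt t / Real.logb 2 t * Real.logb 2 (p:ℝ)
            = Real.sqrt t * (Real.log (p:ℝ) / Real.log t) := by
          rw [Real.logb, Real.logb]
          field_simp
        rw [h3]
        have h2 : Real.sqrt (p:ℝ) / Real.sqrt t ≤ Real.log (p:ℝ) / Real.log t := by
          rw [div_le_div_iff₀ hst0 hlt]
          linarith [hkey]
        calc Real.sqrt (p:ℝ) = Real.sqrt t * (Real.sqrt (p:ℝ) / Real.sqrt t) := by
              field_simp
          _ ≤ Real.sqrt t * (Real.log (p:ℝ) / Real.log t) :=
              mul_le_mul_of_nonneg_left h2 (Real.sqrt_nonneg t)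
      have h4 : 0 ≤ (p:ℝ) / Real.sqrt t := by positivity
      have h5 : Real.logb 2 ((max 2 p : ℕ) : ℝ) = Real.logb 2 (p:ℝ) := by rw [hmaxeq]
      have h6 : 0 < Real.logb 2 (p:ℝ) := Real.logb_pos (by norm_num) (by linarith)
      rw [h5]
      nlinarith [Real.sqrt_nonneg t]

theorem cost_bound_NM :
    ∃ C : ℝ, C > 0 ∧
      ∀ (N M : ℕ), 2 ≤ N → 2 ≤ M → (M : ℝ) ≤ 2 ^ N →
      ∀ (r : ℕ), 1 ≤ r → r ≤ N →
      ∀ (p : Fin r → ℕ),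
        (∀ i, 1 ≤ p i) → (∀ i, p i ≤ N) →
        (∑ i, p i ≤ N) →
        (∏ i, max 2 (p i) ≤ M) →
        ∑ i, Real.sqrt (p i)
          ≤ C * Real.sqrt ((N : ℝ) * Real.logb 2 M /
              (Real.logb 2 ((N : ℝ) / Real.logb 2 M) + 1)) := by
  refine ⟨6, by norm_num, ?_⟩
  intro N M hN hM hMN r hr hrN p hp1 hpN hsum hprod
  set L : ℝ := Real.logb 2 (M : ℝ) with hLdef
  have hL1 : 1 ≤ L := by
    rw [hLdef, ← Real.logb_self_eq_one (b := 2) (by norm_num)]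
    exact Real.logb_le_logb_of_le (by norm_num) (by norm_num) (by exact_mod_cast hM)
  have hL0 : 0 < L := by linarith
  have hN2 : (2:ℝ) ≤ (N:ℝ) := by exact_mod_cast hN
  have hN0 : (0:ℝ) < N := by linarith
  have hLN : L ≤ (N:ℝ) := by
    have h1 : L ≤ Real.logb 2 ((2:ℝ) ^ N) := by
      apply Real.logb_le_logb_of_le (by norm_num) (by positivity) hMN
    rwa [Real.logb_pow, Real.logb_self_eq_one (by norm_num), mul_one] at h1
  have hND : 1 ≤ (N:ℝ) / L := (one_le_div hL0).mpr hLN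
  set D : ℝ := Real.logb 2 ((N:ℝ) / L) + 1 with hDdef
  have hD1 : 1 ≤ D := by
    have := Real.logb_nonneg (b := 2) (by norm_num) hND
    simp only [hDdef]; linarith
  have hD0 : 0 < D := by linarith
  set X : ℝ := Real.sqrt ((N:ℝ) * L / D) with hXdef
  have hXnn : 0 ≤ X := Real.sqrt_nonneg _
  have hNne : (N:ℝ) ≠ 0 := ne_of_gt hN0
  have hLne : L ≠ 0 := ne_of_gt hL0
  have hDne : D ≠ 0 := ne_of_gt hD0
  have hNLD : 0 ≤ (N:ℝ) * L / D := div_nonneg (mul_nonneg hN0.le hL0.le) hD0.le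
  clear_value L D X
  -- sum of logs bound
  have hsumlog : ∑ i, Real.logb 2 ((max 2 (p i) : ℕ) : ℝ) ≤ L := by
    have hne : ∀ i ∈ Finset.univ (α := Fin r), ((max 2 (p i) : ℕ) : ℝ) ≠ 0 := by
      intro i _
      have : (2:ℕ) ≤ max 2 (p i) := Nat.le_max_left _ _
      positivity
    have heq : ∑ i, Real.logb 2 ((max 2 (p i) : ℕ) : ℝ)
        = Real.logb 2 (∏ i, ((max 2 (p i) : ℕ) : ℝ)) := by
      simp only [Real.logb, ← Finset.sum_div]
      rw [Real.log_prod hne]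
    rw [heq, hLdef]
    have hprod' : (∏ i, ((max 2 (p i) : ℕ) : ℝ)) ≤ (M : ℝ) := by
      rw [← Nat.cast_prod]; exact_mod_cast hprod
    have hprodpos : (0:ℝ) < ∏ i, ((max 2 (p i) : ℕ) : ℝ) := by
      apply Finset.prod_pos; intro i _
      have : (2:ℕ) ≤ max 2 (p i) := Nat.le_max_left _ _
      positivity
    exact Real.logb_le_logb_of_le (by norm_num) hprodpos hprod'
  have hsumN : ∑ i, ((p i : ℕ) : ℝ) ≤ (N:ℝ) := by
    rw [← Nat.cast_sum]; exact_mod_cast hsum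
  by_cases hcase : (N:ℝ) / L < 8
  · -- trivial case
    have htriv : ∑ i, Real.sqrt (p i) ≤ (N:ℝ) := by
      calc ∑ i, Real.sqrt (p i) ≤ ∑ i, ((p i : ℕ) : ℝ) := by
            apply Finset.sum_le_sum
            intro i _
            have h1 : (1:ℝ) ≤ ((p i : ℕ) : ℝ) := by exact_mod_cast hp1 i
            have h2 := Real.sqrt_le_sqrt (show ((p i : ℕ) : ℝ) ≤ ((p i : ℕ) : ℝ)^2 by nlinarith)
            rwa [Real.sqrt_sq (by linarith)] at h2
        _ ≤ (N:ℝ) := hsumN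
    have hD4 : D ≤ 4 := by
      have h1 : Real.logb 2 ((N:ℝ)/L) ≤ Real.logb 2 8 :=
        Real.logb_le_logb_of_le (by norm_num) (by linarith) (by linarith)
      have h2 : Real.logb 2 (8:ℝ) = 3 := by
        rw [show (8:ℝ) = 2^(3:ℕ) by norm_num, Real.logb_pow,
          Real.logb_self_eq_one (by norm_num)]
        norm_num
      simp only [hDdef]; linarith [h1, h2.le, h2.ge]
    have hL8 : (N:ℝ) < 8 * L := by
      rw [div_lt_iff₀ hL0] at hcase; linarith
    have hX6 : (N:ℝ) / 6 ≤ X := by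
      rw [hXdef, Real.le_sqrt (by positivity) hNLD]
      rw [le_div_iff₀ hD0]
      nlinarith [mul_le_mul_of_nonneg_left hD4 (sq_nonneg ((N:ℝ)/6)),
        mul_lt_mul_of_pos_left hL8 hN0]
    linarith
  · push_neg at hcase
    have hlog8 : (3:ℝ) ≤ Real.logb 2 ((N:ℝ)/L) := by
      have h2 : Real.logb 2 (8:ℝ) = 3 := by
        rw [show (8:ℝ) = 2^(3:ℕ) by norm_num, Real.logb_pow,
          Real.logb_self_eq_one (by norm_num)]
        norm_num
      rw [← h2]
      exact Real.logb_le_logb_of_le (by norm_num) (by norm_num) hcase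
    have hD4 : 4 ≤ D := by simp only [hDdef]; linarith
    set t : ℝ := (N:ℝ) * D / L with htdef
    clear_value t
    have ht0 : 0 < t := by rw [htdef]; positivity
    have hteq : t = ((N:ℝ)/L) * D := by rw [htdef]; ring
    have htNL : (N:ℝ)/L ≤ t := by
      rw [hteq]
      nlinarith [div_pos hN0 hL0]
    have ht9 : (9:ℝ) ≤ t := by
      rw [hteq]
      nlinarith [mul_le_mul hcase hD4 (by norm_num) (by linarith : (0:ℝ) ≤ (N:ℝ)/L)]
    have hst0 : 0 < Real.sqrt t := Real.sqrt_pos.mpr ht0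
    have hlogt : D - 1 ≤ Real.logb 2 t := by
      have := Real.logb_le_logb_of_le (b := 2) (by norm_num)
        (show (0:ℝ) < (N:ℝ)/L by positivity) htNL
      simp only [hDdef]; linarith
    have hlogt0 : 0 < Real.logb 2 t := by linarith
    have hct : Real.sqrt t / Real.logb 2 t ≤ 2 * Real.sqrt t / D := by
      have h5 : D ≤ 2 * Real.logb 2 t := by linarith
      rw [div_le_div_iff₀ hlogt0 hD0]
      calc Real.sqrt t * D ≤ Real.sqrt t * (2 * Real.logb 2 t) :=
            mul_le_mul_of_nonneg_left h5 (Real.sqrt_nonneg t)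
        _ = 2 * Real.sqrt t * Real.logb 2 t := by ring
    -- pointwise bound and summation
    have hmain : ∑ i, Real.sqrt (p i)
        ≤ (∑ i, ((p i : ℕ) : ℝ)) / Real.sqrt t
          + (Real.sqrt t / Real.logb 2 t + 3)
            * ∑ i, Real.logb 2 ((max 2 (p i) : ℕ) : ℝ) := by
      rw [Finset.sum_div, Finset.mul_sum, ← Finset.sum_add_distrib]
      apply Finset.sum_le_sum
      intro i _
      exact aux_pointwise t ht9 (p i) (hp1 i)
    have hc0 : 0 ≤ Real.sqrt t / Real.logb 2 t + 3 := by positivity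
    have hsumlog0 : 0 ≤ ∑ i, Real.logb 2 ((max 2 (p i) : ℕ) : ℝ) := by
      apply Finset.sum_nonneg
      intro i _
      apply Real.logb_nonneg (by norm_num)
      have : (2:ℕ) ≤ max 2 (p i) := Nat.le_max_left _ _
      exact_mod_cast le_trans (by norm_num) this
    have hstep : ∑ i, Real.sqrt (p i)
        ≤ (N:ℝ) / Real.sqrt t + (Real.sqrt t / Real.logb 2 t + 3) * L := by
      have h1 : (∑ i, ((p i : ℕ) : ℝ)) / Real.sqrt t ≤ (N:ℝ) / Real.sqrt t := by
        gcongr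
      have h2 : (Real.sqrt t / Real.logb 2 t + 3)
            * ∑ i, Real.logb 2 ((max 2 (p i) : ℕ) : ℝ)
          ≤ (Real.sqrt t / Real.logb 2 t + 3) * L :=
        mul_le_mul_of_nonneg_left hsumlog hc0
      linarith [hmain]
    -- three square-root bounds
    have b1 : (N:ℝ) / Real.sqrt t ≤ X := by
      rw [hXdef, Real.le_sqrt (div_nonneg hN0.le (Real.sqrt_nonneg t)) hNLD]
      have heq : ((N:ℝ) / Real.sqrt t)^2 = (N:ℝ)*L/D := by
        rw [div_pow, Real.sq_sqrt ht0.le, htdef]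
        field_simp
      rw [heq]
    have b2 : Real.sqrt t * L / D ≤ X := by
      rw [hXdef, Real.le_sqrt
        (div_nonneg (mul_nonneg (Real.sqrt_nonneg t) hL0.le) hD0.le) hNLD]
      have heq : (Real.sqrt t * L / D)^2 = (N:ℝ)*L/D := by
        rw [div_pow, mul_pow, Real.sq_sqrt ht0.le, htdef]
        field_simp
      rw [heq]
    have b3 : L ≤ X := by
      rw [hXdef, Real.le_sqrt hL0.le hNLD]
      have hDle : D ≤ (N:ℝ)/L := by
        have := aux_logb_lin ((N:ℝ)/L) hcase
        simp only [hDdef]; linarith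
      rw [le_div_iff₀ hD0]
      rw [le_div_iff₀ hL0] at hDle
      nlinarith [mul_le_mul_of_nonneg_left hDle hL0.le]
    have hfin : (Real.sqrt t / Real.logb 2 t + 3) * L
        ≤ 2 * (Real.sqrt t * L / D) + 3 * L := by
      have h3 : (Real.sqrt t / Real.logb 2 t + 3) * L ≤ (2 * Real.sqrt t / D + 3) * L :=
        mul_le_mul_of_nonneg_right (by linarith) hL0.le
      have h4 : (2 * Real.sqrt t / D + 3) * L = 2 * (Real.sqrt t * L / D) + 3 * L := by
        ring
      linarith
    linarith
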